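/- Let 0 < ρ < 1 and d₁, d₂ > 0. There exists a 2×2 positive definite matrix D with D⁻¹ = K_y⁻¹ + Λ for some diagonal positive semidefinite Λ, with top-left entry d₁ and bottom-right entry d₂, if and only if max(d₁,d₂) ≤ min(1, ρ²·min(d₁,d₂) + 1 - ρ²). -/

import Mathlib

open Matrix

set_option maxHeartbeats 1000000 in
theorem stmt3 (ρ d₁ d₂ : ℝ) (hρ : 0 < ρ) (hρ1 : ρ < 1)
    (hd₁ : 0 < d₁) (hd₂ : 0 < d₂)
    (K : Matrix (Fin 2) (Fin 2) ℝ) (hK : K = !![1, ρ; ρ, 1]) :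
    (∃ (D : Matrix (Fin 2) (Fin 2) ℝ) (l₁ l₂ : ℝ),
        D.PosDef ∧ 0 ≤ l₁ ∧ 0 ≤ l₂ ∧
        D⁻¹ = K⁻¹ + Matrix.diagonal ![l₁, l₂] ∧
        D 0 0 = d₁ ∧ D 1 1 = d₂) ↔
      max d₁ d₂ ≤ min 1 (ρ ^ 2 * min d₁ d₂ + 1 - ρ ^ 2) := by
  have hρ2 : (0:ℝ) < 1 - ρ^2 := by nlinarith
  set a : ℝ := (1 - ρ^2)⁻¹ with ha_def
  have ka : a * (1 - ρ^2) = 1 := inv_mul_cancel₀ (ne_of_gt hρ2)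
  have ha0 : 0 < a := inv_pos.2 hρ2
  have ha1 : 1 < a := by
    rw [ha_def]
    rw [lt_inv_comm₀ one_pos hρ2]
    nlinarith
  have ka2 : a^2 - ρ^2*a^2 = a := by nlinarith [ka]
  have hKinv : K⁻¹ = !![a, -(ρ*a); -(ρ*a), a] := by
    apply inv_eq_right_inv
    subst hK
    ext i j
    fin_cases i <;> fin_cases j <;>
      simp [Matrix.mul_apply, Fin.sum_univ_two, Matrix.one_apply] <;>
      linear_combination ka
  constructor
  · rintro ⟨D, l₁, l₂, hD, hl₁, hl₂, hinv, h00, h11⟩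
    set u : ℝ := a + l₁ with hu_def
    set v : ℝ := a + l₂ with hv_def
    have hu : a ≤ u := by simp [hu_def]; linarith
    have hv : a ≤ v := by simp [hv_def]; linarith
    set Δ : ℝ := u*v - ρ^2*a^2 with hΔ_def
    have hΔ : 0 < Δ := by nlinarith [mul_nonneg (sub_nonneg.2 hu) (sub_nonneg.2 hv)]
    have hM : K⁻¹ + Matrix.diagonal ![l₁, l₂] = !![u, -(ρ*a); -(ρ*a), v] := by
      rw [hKinv]
      ext i j
      fin_cases i <;> fin_cases j <;> simp [Matrix.diagonal, hu_def, hv_def]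
    have hN : (!![u, -(ρ*a); -(ρ*a), v] : Matrix (Fin 2) (Fin 2) ℝ)⁻¹
        = !![v/Δ, ρ*a/Δ; ρ*a/Δ, u/Δ] := by
      apply inv_eq_right_inv
      ext i j
      fin_cases i <;> fin_cases j <;>
        simp [Matrix.mul_apply, Fin.sum_univ_two, Matrix.one_apply] <;>
        field_simp <;> ring_nf <;> rw [hΔ_def] <;> ring
    have hD_eq : D = !![v/Δ, ρ*a/Δ; ρ*a/Δ, u/Δ] := by
      rw [← Matrix.nonsing_inv_nonsing_inv D hD.det_pos.ne'.isUnit, hinv, hM, hN]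
    have hd1 : d₁ * Δ = v := by
      rw [← h00, hD_eq]; simp; field_simp
    have hd2 : d₂ * Δ = u := by
      rw [← h11, hD_eq]; simp; field_simp
    have hΔrel : Δ = d₁*d₂*Δ^2 - ρ^2*a^2 := by
      linear_combination hΔ_def - u*hd1 - d₁*Δ*hd2
    clear hM hN hD_eq hinv h00 h11 hD hK hKinv
    have haΔ : a*Δ - ρ^2*a*Δ = Δ := by linear_combination Δ*ka
    have hle : ∀ x y : ℝ, a ≤ x * Δ → a ≤ y * Δ → x*y*Δ^2 = Δ + ρ^2*a^2 →
        x ≤ 1 ∧ x ≤ ρ^2*y + 1 - ρ^2 := by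
      intro x y hxa hya hrel
      constructor
      · nlinarith [mul_nonneg (sub_nonneg.2 hxa) (sub_nonneg.2 hya),
          mul_nonneg (sub_nonneg.2 hxa) (by linarith : (0:ℝ) ≤ a - 1),
          mul_nonneg ha0.le (sub_nonneg.2 hya), hrel, ka2, hΔ]
      · nlinarith [mul_nonneg (sub_nonneg.2 hya)
          (by nlinarith : (0:ℝ) ≤ x*Δ + ρ^2*a), hrel, haΔ, mul_pos ha0 hΔ]
    have hrel' : d₁*d₂*Δ^2 = Δ + ρ^2*a^2 := by linarith [hΔrel]
    have h1 := hle d₁ d₂ (by rw [hd1]; exact hv) (by rw [hd2]; exact hu) hrel'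
    have h2 := hle d₂ d₁ (by rw [hd2]; exact hu) (by rw [hd1]; exact hv)
      (by linarith [hrel'] )
    apply max_le <;> apply le_min
    · exact h1.1
    · rcases le_total d₂ d₁ with hc | hc
      · rw [min_eq_right hc]; exact h1.2
      · rw [min_eq_left hc]; nlinarith [h1.1, hρ2]
    · exact h2.1
    · rcases le_total d₂ d₁ with hc | hc
      · rw [min_eq_right hc]; nlinarith [h2.1, hρ2]
      · rw [min_eq_left hc]; exact h2.2
  · intro h
    have hmax : max d₁ d₂ ≤ ρ^2 * min d₁ d₂ + 1 - ρ^2 := le_trans h (min_le_right _ _)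
    have h12 : d₁ ≤ ρ^2*d₂ + 1 - ρ^2 := by
      have := le_trans (le_max_left d₁ d₂) hmax
      nlinarith [min_le_right d₁ d₂, sq_nonneg ρ]
    have h21 : d₂ ≤ ρ^2*d₁ + 1 - ρ^2 := by
      have := le_trans (le_max_right d₁ d₂) hmax
      nlinarith [min_le_left d₁ d₂, sq_nonneg ρ]
    set s : ℝ := Real.sqrt (1 + 4*ρ^2*a^2*d₁*d₂) with hs_def
    have hsarg : (0:ℝ) ≤ 1 + 4*ρ^2*a^2*d₁*d₂ := by positivity
    have hs2 : s^2 = 1 + 4*ρ^2*a^2*d₁*d₂ := Real.sq_sqrt hsarg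
    have hs0 : 0 ≤ s := Real.sqrt_nonneg _
    set t : ℝ := (1+s)/(2*d₁*d₂) with ht_def
    have ht : 0 < t := by rw [ht_def]; positivity
    have hq : d₁*d₂*t^2 = t + ρ^2*a^2 := by
      rw [ht_def]
      field_simp
      ring_nf
      linear_combination hs2
    have hbound : ∀ x y : ℝ, 0 < x → 0 < y → x*y = d₁*d₂ → x ≤ ρ^2*y + 1 - ρ^2 →
        a ≤ y * ((1+s)/(2*x*y)) := by
      intro x y hx hy hxyd hxy
      have had : a*x ≤ ρ^2*a*y + 1 := by nlinarith [mul_le_mul_of_nonneg_left hxy ha0.le, ka]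
      have hs2' : s^2 = 1 + 4*ρ^2*a^2*(x*y) := by rw [hxyd]; linear_combination hs2
      have hkey : (2*a*x - 1)^2 ≤ s^2 := by
        nlinarith [hs2', mul_le_mul_of_nonneg_left had (by positivity : (0:ℝ) ≤ 4*a*x)]
      have hss : 2*a*x - 1 ≤ s := by
        rcases le_or_gt (2*a*x - 1) 0 with hc | hc
        · linarith
        · nlinarith [hkey, hs0]
      have heq : y * ((1+s)/(2*x*y)) = (1+s)/(2*x) := by
        field_simp
      rw [heq, le_div_iff₀ (by positivity)]
      linarith
    have hl1 : a ≤ d₂ * t := by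
      have := hbound d₁ d₂ hd₁ hd₂ rfl h12
      rw [ht_def]; exact this
    have hl2 : a ≤ d₁ * t := by
      have := hbound d₂ d₁ hd₂ hd₁ (mul_comm d₂ d₁) h21
      rw [ht_def]
      calc a ≤ d₁ * ((1+s)/(2*d₂*d₁)) := this
      _ = d₁ * ((1+s)/(2*d₁*d₂)) := by ring_nf
    refine ⟨!![d₁, ρ*a/t; ρ*a/t, d₂], d₂*t - a, d₁*t - a, ?_, by linarith, by linarith, ?_, by simp, by simp⟩
    · -- PosDef
      have hdet : 0 < d₁*d₂ - (ρ*a/t)^2 := by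
        have h1 : (d₁*d₂ - (ρ*a/t)^2) * t^2 = t := by
          field_simp
          linear_combination hq
        nlinarith [h1, ht, sq_nonneg t]
      rw [Matrix.posDef_iff_dotProduct_mulVec]
      constructor
      · ext i j
        fin_cases i <;> fin_cases j <;>
          simp [Matrix.conjTranspose_apply]
      · intro x hx
        have hx' : x 0 ≠ 0 ∨ x 1 ≠ 0 := by
          by_contra hc
          push_neg at hc
          exact hx (by ext i; fin_cases i <;> simp [hc.1, hc.2])
        have hform : dotProduct (star x) ((!![d₁, ρ*a/t; ρ*a/t, d₂]) *ᵥ x)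
            = d₁ * (x 0)^2 + 2*(ρ*a/t)*(x 0)*(x 1) + d₂*(x 1)^2 := by
          simp [dotProduct, Matrix.mulVec, Fin.sum_univ_two]
          ring
        rw [hform]
        rcases eq_or_ne (x 1) 0 with he | he
        · have h0 : x 0 ≠ 0 := by tauto
          have hp : 0 < (x 0)^2 := lt_of_le_of_ne (sq_nonneg _) (Ne.symm (pow_ne_zero 2 h0))
          rw [he]
          nlinarith [mul_pos hd₁ hp]
        · have hp : 0 < (x 1)^2 := lt_of_le_of_ne (sq_nonneg _) (Ne.symm (pow_ne_zero 2 he))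
          nlinarith [sq_nonneg (d₁*x 0 + (ρ*a/t)*x 1), mul_pos hdet hp, hd₁]
    · -- inverse identity
      have hgen : ∀ u v w b : ℝ, w ≠ 0 → u*v*w^2 = w + b^2 →
          (!![u, b/w; b/w, v] : Matrix (Fin 2) (Fin 2) ℝ) * !![v*w, -b; -b, u*w] = 1 := by
        intro u v w b hw hrel
        ext i j
        fin_cases i <;> fin_cases j <;>
          simp [Matrix.mul_apply, Fin.sum_univ_two, Matrix.one_apply] <;>
          field_simp <;>
          first
            | ring1
            | linear_combination hrel
            | linear_combination -hrel
            | linear_combination w*hrel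
      have hM : K⁻¹ + Matrix.diagonal ![d₂*t - a, d₁*t - a]
          = !![d₂*t, -(ρ*a); -(ρ*a), d₁*t] := by
        rw [hKinv]
        ext i j
        fin_cases i <;> fin_cases j <;> simp [Matrix.diagonal]
      rw [hM]
      exact inv_eq_right_inv (hgen d₁ d₂ t (ρ*a) ht.ne' (by linear_combination hq))
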